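/- Let L : C ⇆ D : R be a weak right adjunction between monoidal categories (i.e., ε : LR → Id and η : Id → RL satisfy (Rε)∘(ηR) = id_R), and let ℓ be a lax-monoidal structure on R. Then the natural transformation c_{X,Y} : L(X⊗Y) → L(RLX ⊗ RLY) → LR(LX ⊗ LY) → LX ⊗ LY, given by L(η⊗η), then L(ℓ), then ε, is a colax-monoidal structure on L (i.e., it satisfies the coassociativity diagram). -/

import Mathlib

open CategoryTheory Category MonoidalCategory

/-- A lax-monoidal structure on a functor between monoidal categories. -/
structure LaxStruct {C D : Type*} [Category C] [Category D]
    [MonoidalCategory C] [MonoidalCategory D] (F : C ⥤ D) where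
  μ : ∀ X Y : C, F.obj X ⊗ F.obj Y ⟶ F.obj (X ⊗ Y)
  η : 𝟙_ D ⟶ F.obj (𝟙_ C)
  μ_natural : ∀ {X Y X' Y' : C} (f : X ⟶ X') (g : Y ⟶ Y'),
    (F.map f ⊗ₘ F.map g) ≫ μ X' Y' = μ X Y ≫ F.map (f ⊗ₘ g)
  assoc : ∀ X Y Z : C,
    (μ X Y ⊗ₘ 𝟙 (F.obj Z)) ≫ μ (X ⊗ Y) Z ≫ F.map (α_ X Y Z).hom =
      (α_ (F.obj X) (F.obj Y) (F.obj Z)).hom ≫ (𝟙 (F.obj X) ⊗ₘ μ Y Z) ≫ μ X (Y ⊗ Z)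
  left_unit : ∀ X : C,
    (η ⊗ₘ 𝟙 (F.obj X)) ≫ μ (𝟙_ C) X ≫ F.map (λ_ X).hom = (λ_ (F.obj X)).hom
  right_unit : ∀ X : C,
    (𝟙 (F.obj X) ⊗ₘ η) ≫ μ X (𝟙_ C) ≫ F.map (ρ_ X).hom = (ρ_ (F.obj X)).hom

/-- A colax-monoidal structure on a functor between monoidal categories. -/
structure ColaxStruct {C D : Type*} [Category C] [Category D]
    [MonoidalCategory C] [MonoidalCategory D] (F : C ⥤ D) where
  δ : ∀ X Y : C, F.obj (X ⊗ Y) ⟶ F.obj X ⊗ F.obj Y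
  ε : F.obj (𝟙_ C) ⟶ 𝟙_ D
  δ_natural : ∀ {X Y X' Y' : C} (f : X ⟶ X') (g : Y ⟶ Y'),
    F.map (f ⊗ₘ g) ≫ δ X' Y' = δ X Y ≫ (F.map f ⊗ₘ F.map g)
  coassoc : ∀ X Y Z : C,
    δ (X ⊗ Y) Z ≫ (δ X Y ⊗ₘ 𝟙 (F.obj Z)) ≫ (α_ (F.obj X) (F.obj Y) (F.obj Z)).hom =
      F.map (α_ X Y Z).hom ≫ δ X (Y ⊗ Z) ≫ (𝟙 (F.obj X) ⊗ₘ δ Y Z)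
  left_counit : ∀ X : C,
    δ (𝟙_ C) X ≫ (ε ⊗ₘ 𝟙 (F.obj X)) ≫ (λ_ (F.obj X)).hom = F.map (λ_ X).hom
  right_counit : ∀ X : C,
    δ X (𝟙_ C) ≫ (𝟙 (F.obj X) ⊗ₘ ε) ≫ (ρ_ (F.obj X)).hom = F.map (ρ_ X).hom


/-- The colax-monoidal-candidate maps on `L` transferred from a lax-monoidal structure on
`R` through `(ε, η)`: `L(X⊗Y) → L(RLX ⊗ RLY) → LR(LX ⊗ LY) → LX ⊗ LY`. -/
def transfDelta {C D : Type*} [Category C] [Category D]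
    [MonoidalCategory C] [MonoidalCategory D]
    (L : C ⥤ D) (R : D ⥤ C)
    (η : 𝟭 C ⟶ L ⋙ R) (ε : R ⋙ L ⟶ 𝟭 D) (ℓ : LaxStruct R) (X Y : C) :
    L.obj (X ⊗ Y) ⟶ L.obj X ⊗ L.obj Y :=
  L.map (η.app X ⊗ₘ η.app Y) ≫ L.map (ℓ.μ (L.obj X) (L.obj Y)) ≫
    ε.app (L.obj X ⊗ L.obj Y)


lemma eps_push {C D : Type*} [Category C] [Category D]
    [MonoidalCategory C] [MonoidalCategory D]
    (L : C ⥤ D) (R : D ⥤ C) (ε : R ⋙ L ⟶ 𝟭 D)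
    {A B : D} (g : A ⟶ B) :
    ε.app A ≫ g = L.map (R.map g) ≫ ε.app B := by
  simpa using (ε.naturality g).symm

lemma transpose_comp {C D : Type*} [Category C] [Category D]
    [MonoidalCategory C] [MonoidalCategory D]
    (L : C ⥤ D) (R : D ⥤ C) (ε : R ⋙ L ⟶ 𝟭 D)
    {A : C} {B B' : D} (f : A ⟶ R.obj B) (g : B ⟶ B') :
    L.map f ≫ ε.app B ≫ g = L.map (f ≫ R.map g) ≫ ε.app B' := by
  rw [eps_push L R ε g, Functor.map_comp, Category.assoc]

lemma transf_key {C D : Type*} [Category C] [Category D]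
    [MonoidalCategory C] [MonoidalCategory D]
    (L : C ⥤ D) (R : D ⥤ C)
    (η : 𝟭 C ⟶ L ⋙ R) (ε : R ⋙ L ⟶ 𝟭 D)
    (htriangle : ∀ Y : D, η.app (R.obj Y) ≫ R.map (ε.app Y) = 𝟙 (R.obj Y))
    (ℓ : LaxStruct R) (X Y : C) :
    η.app (X ⊗ Y) ≫ R.map (transfDelta L R η ε ℓ X Y) =
      (η.app X ⊗ₘ η.app Y) ≫ ℓ.μ (L.obj X) (L.obj Y) := by
  have hnat := η.naturality ((η.app X ⊗ₘ η.app Y) ≫ ℓ.μ (L.obj X) (L.obj Y))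
  simp only [Functor.id_obj, Functor.id_map] at hnat
  have e : transfDelta L R η ε ℓ X Y =
      L.map ((η.app X ⊗ₘ η.app Y) ≫ ℓ.μ (L.obj X) (L.obj Y)) ≫
        ε.app (L.obj X ⊗ L.obj Y) := by
    simp [transfDelta]
  rw [e, Functor.map_comp, ← Category.assoc, ← Functor.comp_map L R, ← hnat,
    Category.assoc, htriangle, Category.comp_id]

/-- if `(L, R, ε, η)` is a weak right adjunction between monoidal categories
(i.e. the triangle identity `(Rε) ∘ (ηR) = id_R` holds) and `ℓ` is a lax-monoidal structure
on `R`, then the transferred maps `c_{X,Y} = ε ∘ L(ℓ) ∘ L(η ⊗ η)` form a colax-monoidal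
structure on `L`: they satisfy the coassociativity diagram. -/
theorem statement14 {C D : Type*} [Category C] [Category D]
    [MonoidalCategory C] [MonoidalCategory D]
    (L : C ⥤ D) (R : D ⥤ C)
    (η : 𝟭 C ⟶ L ⋙ R) (ε : R ⋙ L ⟶ 𝟭 D)
    (htriangle : ∀ Y : D, η.app (R.obj Y) ≫ R.map (ε.app Y) = 𝟙 (R.obj Y))
    (ℓ : LaxStruct R) :
    ∀ X Y Z : C,
      transfDelta L R η ε ℓ (X ⊗ Y) Z ≫
          (transfDelta L R η ε ℓ X Y ⊗ₘ 𝟙 (L.obj Z)) ≫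
          (α_ (L.obj X) (L.obj Y) (L.obj Z)).hom =
        L.map (α_ X Y Z).hom ≫ transfDelta L R η ε ℓ X (Y ⊗ Z) ≫
          (𝟙 (L.obj X) ⊗ₘ transfDelta L R η ε ℓ Y Z) := by
  intro X Y Z
  have hkeyXY := transf_key L R η ε htriangle ℓ X Y
  have hkeyYZ := transf_key L R η ε htriangle ℓ Y Z
  have e1 : transfDelta L R η ε ℓ (X ⊗ Y) Z =
      L.map ((η.app (X ⊗ Y) ⊗ₘ η.app Z) ≫ ℓ.μ (L.obj (X ⊗ Y)) (L.obj Z)) ≫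
        ε.app (L.obj (X ⊗ Y) ⊗ L.obj Z) := by simp [transfDelta]
  have e2 : transfDelta L R η ε ℓ X (Y ⊗ Z) =
      L.map ((η.app X ⊗ₘ η.app (Y ⊗ Z)) ≫ ℓ.μ (L.obj X) (L.obj (Y ⊗ Z))) ≫
        ε.app (L.obj X ⊗ L.obj (Y ⊗ Z)) := by simp [transfDelta]
  rw [e1, e2]
  simp only [Category.assoc]
  rw [transpose_comp L R ε, transpose_comp L R ε, ← Functor.map_comp_assoc]
  congr 1
  apply congrArg
  -- now a purely C-level computation
  simp only [Functor.map_comp, Category.assoc]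
  rw [← reassoc_of% (ℓ.μ_natural (transfDelta L R η ε ℓ X Y) (𝟙 (L.obj Z))),
    ← ℓ.μ_natural (𝟙 (L.obj X)) (transfDelta L R η ε ℓ Y Z)]
  rw [show R.map (𝟙 (L.obj Z)) = 𝟙 (R.obj (L.obj Z)) from R.map_id _, show R.map (𝟙 (L.obj X)) = 𝟙 (R.obj (L.obj X)) from R.map_id _]
  slice_lhs 1 2 => rw [tensorHom_comp_tensorHom, hkeyXY]; simp only [Category.comp_id]
  slice_rhs 2 3 => rw [tensorHom_comp_tensorHom, hkeyYZ]; simp only [Category.comp_id]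
  simp only [Category.assoc]
  rw [← tensorHom_comp_tensorHom, ← tensorHom_comp_tensorHom]
  simp only [Category.assoc]
  rw [ℓ.assoc, ← associator_naturality_assoc]
  rfl
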